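/- Monotonicity of the quadratic form under stochastic maps: if φ is a completely positive trace-preserving map, P, Q are positive definite with φ(P), φ(Q) positive definite, and s > 0, then for every matrix A, Tr(A* (R_P + s L_Q)^{-1}(A)) ≥ Tr(φ(A)* (R_{φ(P)} + s L_{φ(Q)})^{-1}(φ(A))). -/

import Mathlib

open Matrix
open scoped ComplexOrder

lemma aux_diag_nonneg {k : ℕ} {M : Matrix (Fin k) (Fin k) ℂ} (hM : M.PosSemidef) (i : Fin k) :
    0 ≤ M i i := by
  exact hM.diag_nonneg

lemma aux_trace_nonneg {k : ℕ} {M : Matrix (Fin k) (Fin k) ℂ} (hM : M.PosSemidef) :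
    0 ≤ M.trace :=
  Finset.sum_nonneg fun i _ => aux_diag_nonneg hM i

lemma aux_trace_mul_nonneg {k : ℕ} {B M : Matrix (Fin k) (Fin k) ℂ}
    (hB : B.PosSemidef) (hM : M.PosSemidef) : 0 ≤ (B * M).trace := by
  obtain ⟨S, hS⟩ : ∃ S : Matrix (Fin k) (Fin k) ℂ, M = Sᴴ * S := by
    open scoped MatrixOrder in
    obtain ⟨S, hS⟩ := CStarAlgebra.nonneg_iff_eq_star_mul_self.mp hM.nonneg
    exact ⟨S, hS⟩
  rw [hS, ← Matrix.mul_assoc, Matrix.trace_mul_cycle]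
  exact aux_trace_nonneg (hB.mul_mul_conjTranspose_same S)

lemma aux_sum_posSemidef {ι : Type*} (t : Finset ι) {k : ℕ} (f : ι → Matrix (Fin k) (Fin k) ℂ)
    (h : ∀ i, (f i).PosSemidef) : (∑ i ∈ t, f i).PosSemidef := by
  classical
  induction t using Finset.induction with
  | empty => simpa using Matrix.PosSemidef.zero
  | insert _ _ hx ih => rw [Finset.sum_insert hx]; exact (h _).add ih

set_option maxHeartbeats 1000000 in
theorem monotonicity_of_quadratic_form_under_CPTP {n m N : ℕ}
    (V : Fin N → Matrix (Fin m) (Fin n) ℂ)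
    (hTP : ∑ k, (V k)ᴴ * V k = 1)
    (φ : Matrix (Fin n) (Fin n) ℂ → Matrix (Fin m) (Fin m) ℂ)
    (hφ : ∀ X, φ X = ∑ k, V k * X * (V k)ᴴ)
    (P Q : Matrix (Fin n) (Fin n) ℂ) (hP : P.PosDef) (hQ : Q.PosDef)
    (hφP : (φ P).PosDef) (hφQ : (φ Q).PosDef)
    (s : ℝ) (hs : 0 < s)
    (A α : Matrix (Fin n) (Fin n) ℂ) (β : Matrix (Fin m) (Fin m) ℂ)
    (hα : α * P + (s : ℂ) • (Q * α) = A)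
    (hβ : β * φ P + (s : ℂ) • (φ Q * β) = φ A) :
    ((φ A)ᴴ * β).trace ≤ (Aᴴ * α).trace := by
  have hsC : star (s:ℂ) = (s:ℂ) := by simp [Complex.star_def, Complex.conj_ofReal]
  have hPH : Pᴴ = P := hP.isHermitian
  have hQH : Qᴴ = Q := hQ.isHermitian
  have hφPH : (φ P)ᴴ = φ P := hφP.isHermitian
  have hφQH : (φ Q)ᴴ = φ Q := hφQ.isHermitian
  set Y : Matrix (Fin n) (Fin n) ℂ := ∑ k, (V k)ᴴ * β * V k with hYdef
  set δ : Matrix (Fin n) (Fin n) ℂ := α - Y with hδdef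
  -- the adjoint of φ
  set ψ : Matrix (Fin m) (Fin m) ℂ → Matrix (Fin n) (Fin n) ℂ :=
    fun B => ∑ k, (V k)ᴴ * B * V k with hψdef
  have hYψ : Y = ψ β := rfl
  -- swap lemma: trace (φ C * B) = trace (ψ B * C)
  have hswap : ∀ (B : Matrix (Fin m) (Fin m) ℂ) (C : Matrix (Fin n) (Fin n) ℂ),
      ((φ C) * B).trace = ((ψ B) * C).trace := by
    intro B C
    rw [hφ, hψdef, Matrix.sum_mul, Matrix.sum_mul, Matrix.trace_sum, Matrix.trace_sum]
    refine Finset.sum_congr rfl fun k _ => ?_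
    calc (V k * C * (V k)ᴴ * B).trace
        = (V k * (C * ((V k)ᴴ * B))).trace := by rw [Matrix.mul_assoc, Matrix.mul_assoc]
      _ = ((C * ((V k)ᴴ * B)) * V k).trace := Matrix.trace_mul_comm _ _
      _ = (C * ((V k)ᴴ * B * V k)).trace := by rw [Matrix.mul_assoc, Matrix.mul_assoc]
      _ = ((V k)ᴴ * B * V k * C).trace := Matrix.trace_mul_comm _ _
  have hconj : ∀ X : Matrix (Fin n) (Fin n) ℂ, (φ X)ᴴ = φ Xᴴ := by
    intro X
    rw [hφ, hφ, Matrix.conjTranspose_sum]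
    refine Finset.sum_congr rfl fun k _ => ?_
    simp [Matrix.conjTranspose_mul, Matrix.mul_assoc]
  have hYH : Yᴴ = ψ βᴴ := by
    rw [hYdef, hψdef, Matrix.conjTranspose_sum]
    refine Finset.sum_congr rfl fun k _ => ?_
    simp [Matrix.conjTranspose_mul, Matrix.mul_assoc]
  -- G2: ((φ A)ᴴ * β).trace = b1 + s*b2
  have hG2 : ((φ A)ᴴ * β).trace
      = (βᴴ * β * φ P).trace + (s:ℂ) * (βᴴ * (φ Q) * β).trace := by
    rw [← hβ]
    simp only [Matrix.conjTranspose_add, Matrix.conjTranspose_smul, Matrix.conjTranspose_mul,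
      hφPH, hφQH, hsC, Matrix.add_mul, Matrix.smul_mul, Matrix.trace_add, Matrix.trace_smul,
      smul_eq_mul]
    rw [Matrix.trace_mul_cycle βᴴ β (φ P)]
  -- G3: (Aᴴ * Y).trace = ((φ A)ᴴ * β).trace
  have hG3 : (Aᴴ * Y).trace = ((φ A)ᴴ * β).trace := by
    rw [hconj, hswap β Aᴴ, ← hYψ, Matrix.trace_mul_comm]
  -- G4: (Yᴴ * A).trace = ((φ A)ᴴ * β).trace
  have hG4 : (Yᴴ * A).trace = ((φ A)ᴴ * β).trace := by
    have h4' : (Yᴴ * A).trace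
        = (βᴴ * β * φ P).trace + (s:ℂ) * (βᴴ * (φ Q) * β).trace := by
      rw [hYH, ← hswap βᴴ A, Matrix.trace_mul_comm, ← hβ]
      simp only [Matrix.mul_add, Matrix.mul_smul, Matrix.trace_add, Matrix.trace_smul,
        smul_eq_mul, ← Matrix.mul_assoc]
    rw [h4', hG2]
  -- G1
  have hG1 : (Aᴴ * α).trace
      = (αᴴ * α * P).trace + (s:ℂ) * (αᴴ * Q * α).trace := by
    rw [← hα]
    simp only [Matrix.conjTranspose_add, Matrix.conjTranspose_smul, Matrix.conjTranspose_mul,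
      hPH, hQH, hsC, Matrix.add_mul, Matrix.smul_mul, Matrix.trace_add, Matrix.trace_smul,
      smul_eq_mul]
    rw [Matrix.trace_mul_cycle αᴴ α P]
  -- G5
  have hG5 : (Aᴴ * Y).trace
      = (αᴴ * Y * P).trace + (s:ℂ) * (αᴴ * Q * Y).trace := by
    rw [← hα]
    simp only [Matrix.conjTranspose_add, Matrix.conjTranspose_smul, Matrix.conjTranspose_mul,
      hPH, hQH, hsC, Matrix.add_mul, Matrix.smul_mul, Matrix.trace_add, Matrix.trace_smul,
      smul_eq_mul]
    rw [Matrix.trace_mul_cycle αᴴ Y P]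
  -- G6
  have hG6 : (Yᴴ * A).trace
      = (Yᴴ * α * P).trace + (s:ℂ) * (Yᴴ * Q * α).trace := by
    rw [← hα]
    simp only [Matrix.mul_add, Matrix.mul_smul, Matrix.trace_add, Matrix.trace_smul,
      smul_eq_mul, ← Matrix.mul_assoc]
  -- G7, G8 : δ expansions
  have hG7 : (δᴴ * δ * P).trace
      = (αᴴ * α * P).trace - (αᴴ * Y * P).trace - (Yᴴ * α * P).trace + (Yᴴ * Y * P).trace := by
    simp [hδdef, Matrix.conjTranspose_sub, Matrix.sub_mul, Matrix.mul_sub, Matrix.trace_sub]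
    ring
  have hG8 : (δᴴ * Q * δ).trace
      = (αᴴ * Q * α).trace - (αᴴ * Q * Y).trace - (Yᴴ * Q * α).trace + (Yᴴ * Q * Y).trace := by
    simp [hδdef, Matrix.conjTranspose_sub, Matrix.sub_mul, Matrix.mul_sub, Matrix.trace_sub]
    ring
  -- Kadison-Schwarz matrices
  set K₁ : Matrix (Fin n) (Fin n) ℂ :=
    ∑ k, (β * V k - V k * Y)ᴴ * (β * V k - V k * Y) with hK₁def
  set K₂ : Matrix (Fin n) (Fin n) ℂ :=
    ∑ k, ((V k)ᴴ * β - Y * (V k)ᴴ) * ((V k)ᴴ * β - Y * (V k)ᴴ)ᴴ with hK₂def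
  have hK₁ : K₁ = ψ (βᴴ * β) - Yᴴ * Y := by
    have expand : ∀ k, (β * V k - V k * Y)ᴴ * (β * V k - V k * Y)
        = (V k)ᴴ * (βᴴ * β) * V k - ((V k)ᴴ * βᴴ * V k) * Y
          - Yᴴ * ((V k)ᴴ * β * V k) + Yᴴ * ((V k)ᴴ * V k) * Y := by
      intro k
      simp only [Matrix.conjTranspose_sub, Matrix.conjTranspose_mul, Matrix.sub_mul,
        Matrix.mul_sub, Matrix.mul_assoc]
      abel
    rw [hK₁def, Finset.sum_congr rfl (fun k _ => expand k)]
    simp only [Finset.sum_sub_distrib, Finset.sum_add_distrib, ← Finset.sum_mul,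
      ← Finset.mul_sum]
    have e1 : (∑ k, (V k)ᴴ * βᴴ * V k) = Yᴴ := hYH.symm
    have e2 : (∑ k, (V k)ᴴ * β * V k) = Y := hYdef.symm
    rw [e1, e2, hTP, Matrix.mul_one]
    simp only [hψdef]
    abel
  have hK₂ : K₂ = ψ (β * βᴴ) - Y * Yᴴ := by
    have expand : ∀ k, ((V k)ᴴ * β - Y * (V k)ᴴ) * ((V k)ᴴ * β - Y * (V k)ᴴ)ᴴ
        = (V k)ᴴ * (β * βᴴ) * V k - ((V k)ᴴ * β * V k) * Yᴴ
          - Y * ((V k)ᴴ * βᴴ * V k) + Y * ((V k)ᴴ * V k) * Yᴴ := by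
      intro k
      simp only [Matrix.conjTranspose_sub, Matrix.conjTranspose_mul,
        Matrix.conjTranspose_conjTranspose, Matrix.sub_mul, Matrix.mul_sub,
        Matrix.mul_assoc]
      abel
    rw [hK₂def, Finset.sum_congr rfl (fun k _ => expand k)]
    simp only [Finset.sum_sub_distrib, Finset.sum_add_distrib, ← Finset.sum_mul,
      ← Finset.mul_sum]
    have e1 : (∑ k, (V k)ᴴ * βᴴ * V k) = Yᴴ := hYH.symm
    have e2 : (∑ k, (V k)ᴴ * β * V k) = Y := hYdef.symm
    rw [e1, e2, hTP, Matrix.mul_one]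
    simp only [hψdef]
    abel
  -- G9
  have hG9 : (K₁ * P).trace = (βᴴ * β * φ P).trace - (Yᴴ * Y * P).trace := by
    rw [hK₁, Matrix.sub_mul, Matrix.trace_sub, ← hswap (βᴴ * β) P,
      Matrix.trace_mul_comm (φ P) (βᴴ * β), Matrix.mul_assoc]
  -- G10
  have hG10 : (Q * K₂).trace = (βᴴ * (φ Q) * β).trace - (Yᴴ * Q * Y).trace := by
    rw [hK₂, Matrix.mul_sub, Matrix.trace_sub, Matrix.trace_mul_comm Q (ψ (β * βᴴ)),
      ← hswap (β * βᴴ) Q, Matrix.trace_mul_comm Q (Y * Yᴴ),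
      Matrix.trace_mul_cycle βᴴ (φ Q) β, Matrix.trace_mul_cycle Yᴴ Q Y,
      Matrix.mul_assoc, Matrix.mul_assoc,
      Matrix.trace_mul_comm (φ Q) (β * βᴴ), Matrix.mul_assoc]
  -- assemble
  have hfinal : (Aᴴ * α).trace - ((φ A)ᴴ * β).trace
      = (δᴴ * δ * P).trace + (s:ℂ) * (δᴴ * Q * δ).trace
        + (K₁ * P).trace + (s:ℂ) * (Q * K₂).trace := by
    linear_combination hG1 + hG2 + (hG3 - hG5) + (hG4 - hG6)
      - hG7 - (s:ℂ) * hG8 - hG9 - (s:ℂ) * hG10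
  have hsnn : (0:ℂ) ≤ (s:ℂ) := by
    rw [Complex.le_def]; simp [hs.le]
  have ht1 : 0 ≤ (δᴴ * δ * P).trace :=
    aux_trace_mul_nonneg (Matrix.posSemidef_conjTranspose_mul_self δ) hP.posSemidef
  have ht2 : 0 ≤ (δᴴ * Q * δ).trace := by
    have : (δᴴ * Q * δ).trace = (δ * δᴴ * Q).trace := by
      rw [Matrix.trace_mul_cycle]
    rw [this]
    exact aux_trace_mul_nonneg (Matrix.posSemidef_self_mul_conjTranspose δ) hQ.posSemidef
  have ht3 : 0 ≤ (K₁ * P).trace := by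
    refine aux_trace_mul_nonneg ?_ hP.posSemidef
    exact aux_sum_posSemidef _ _ fun k => Matrix.posSemidef_conjTranspose_mul_self _
  have ht4 : 0 ≤ (Q * K₂).trace := by
    rw [Matrix.trace_mul_comm]
    refine aux_trace_mul_nonneg ?_ hQ.posSemidef
    exact aux_sum_posSemidef _ _ fun k => Matrix.posSemidef_self_mul_conjTranspose _
  have h0 : 0 ≤ (Aᴴ * α).trace - ((φ A)ᴴ * β).trace := by
    rw [hfinal]
    exact add_nonneg (add_nonneg (add_nonneg ht1 (mul_nonneg hsnn ht2)) ht3)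
      (mul_nonneg hsnn ht4)
  exact sub_nonneg.mp h0
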